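/- For all non-negative integers n, the number of pairs of partitions (λ¹, λ²) with |λ¹|+|λ²| = 3n+2, where each λⁱ is a partition with distinct odd parts (even parts unrestricted), is divisible by 3. -/

import Mathlib

/-- A multiset of natural numbers represents a partition if all parts are positive. -/
def IsPartitionM (m : Multiset ℕ) : Prop := ∀ i ∈ m, 0 < i

/-- A partition all of whose parts are even (and positive). -/
def IsEvenPartition (m : Multiset ℕ) : Prop := IsPartitionM m ∧ ∀ i ∈ m, Even i

/-- A staircase partition: parts k, k-1, ..., 2, 1 (possibly empty). -/
def IsStaircase (m : Multiset ℕ) : Prop := ∃ k : ℕ, m = (Multiset.range k).map (· + 1)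

/-- An odd staircase: parts 2k-1, 2k-3, ..., 3, 1 (possibly empty); its size is k². -/
def IsOddStaircase (m : Multiset ℕ) : Prop := ∃ k : ℕ, m = (Multiset.range k).map (fun i => 2 * i + 1)

/-- A partition into distinct odd parts. -/
def IsDistinctOdd (m : Multiset ℕ) : Prop := m.Nodup ∧ ∀ i ∈ m, Odd i

/-- A partition whose odd parts are distinct (even parts unrestricted). -/
def IsPOD (m : Multiset ℕ) : Prop := IsPartitionM m ∧ ∀ i ∈ m, Odd i → m.count i ≤ 1

/-- A partition into distinct parts, all divisible by 3. -/
def IsDistinctMul3 (m : Multiset ℕ) : Prop := IsPartitionM m ∧ m.Nodup ∧ ∀ i ∈ m, 3 ∣ i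

/-- An overpartition: a partition together with a set of overlined part sizes,
each of which must occur in the partition. -/
def IsOverpartition (x : Multiset ℕ × Finset ℕ) : Prop :=
  IsPartitionM x.1 ∧ ∀ s ∈ x.2, s ∈ x.1

/-- A partition with designated summands: a partition together with, for each part size
occurring with multiplicity `c`, a choice of designated occurrence in `{1, ..., c}`
(and `0` for non-occurring sizes). -/
def IsDesignated (x : Multiset ℕ × (ℕ → ℕ)) : Prop :=
  IsPartitionM x.1 ∧ ∀ s : ℕ,
    (0 < x.1.count s → 1 ≤ x.2 s ∧ x.2 s ≤ x.1.count s) ∧ (x.1.count s = 0 → x.2 s = 0)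



lemma three_dvd_card_of_rot {α : Type*} (σ : Equiv.Perm α)
    (h3 : ∀ a, σ (σ (σ a)) = a) (hfix : ∀ a, σ a ≠ a) : 3 ∣ Nat.card α := by
  rcases finite_or_infinite α with hF | hI
  · have hσ3 : σ ^ 3 = 1 := by
      ext a
      simp [pow_succ, h3 a]
    let G := Subgroup.zpowers σ
    have hpG : IsPGroup 3 G := by
      intro g
      refine ⟨1, ?_⟩
      obtain ⟨k, hk⟩ := g.2
      have : (g : Equiv.Perm α) ^ (3:ℕ) = 1 := by
        have : (g : Equiv.Perm α) = σ ^ k := hk.symm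
        rw [this, ← zpow_natCast, ← zpow_mul, mul_comm, zpow_mul, zpow_natCast, hσ3, one_zpow]
      have : g ^ (3:ℕ) = 1 := by
        apply Subtype.ext
        simpa using this
      simpa using this
    haveI : Fact (Nat.Prime 3) := ⟨by norm_num⟩
    have hcong := hpG.card_modEq_card_fixedPoints α
    have hempty : Nat.card (MulAction.fixedPoints G α) = 0 := by
      have : IsEmpty (MulAction.fixedPoints G α) := by
        constructor
        rintro ⟨a, ha⟩
        have := ha (⟨σ, Subgroup.mem_zpowers σ⟩ : G)
        exact hfix a this
      simp
    rw [hempty] at hcong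
    exact (Nat.modEq_zero_iff_dvd).mp hcong
  · simp [Nat.card_eq_zero_of_infinite]

/-- The conjugate of a partition given as a weakly decreasing function. -/
noncomputable def conjF (f : ℕ → ℕ) : ℕ → ℕ := fun j => {i : ℕ | j < f i}.ncard

lemma ncard_Iio (i : ℕ) : (Set.Iio i).ncard = i := by
  rw [← Finset.coe_range, Set.ncard_coe_finset, Finset.card_range]

lemma ncard_Iic (i : ℕ) : (Set.Iic i).ncard = i + 1 := by
  rw [← Finset.coe_Iic, Set.ncard_coe_finset, Nat.card_Iic]

/-- key principle for downward closed sets of naturals -/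
lemma mem_iff_lt_ncard {s : Set ℕ} (hdc : ∀ ⦃i j : ℕ⦄, i ≤ j → j ∈ s → i ∈ s)
    {B : ℕ} (hB : ∀ i ∈ s, i < B) (i : ℕ) : i ∈ s ↔ i < s.ncard := by
  have hfin : s.Finite := Set.Finite.subset (Set.finite_Iio B) (fun x hx => hB x hx)
  constructor
  · intro hi
    have h1 : Set.Iic i ⊆ s := fun j hj => hdc hj hi
    have := Set.ncard_le_ncard h1 hfin
    rw [ncard_Iic] at this
    omega
  · intro hi
    by_contra hns
    have h1 : s ⊆ Set.Iio i := by
      intro j hj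
      simp only [Set.mem_Iio]
      by_contra hj2
      exact hns (hdc (by omega) hj)
    have := Set.ncard_le_ncard h1 (Set.finite_Iio i)
    rw [ncard_Iio] at this
    omega

lemma lt_conjF_iff {f : ℕ → ℕ} (hf : Antitone f) {B : ℕ} (hB : f B = 0) {i j : ℕ} :
    i < conjF f j ↔ j < f i := by
  have := (mem_iff_lt_ncard (s := {i : ℕ | j < f i})
    (fun a b hab hb => lt_of_lt_of_le hb (hf hab))
    (B := B) (fun a ha => by
      by_contra h
      have : f a ≤ f B := hf (by omega)
      simp only [Set.mem_setOf_eq] at ha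
      omega) i).symm
  exact this

lemma conjF_antitone {f : ℕ → ℕ} (hf : Antitone f) {B : ℕ} (hB : f B = 0) :
    Antitone (conjF f) := by
  intro j j' h
  by_contra hc
  push_neg at hc
  have h1 : conjF f j < conjF f j' := hc
  have h2 : j' < f (conjF f j) := (lt_conjF_iff hf hB).mp h1
  have h3 : conjF f j < conjF f j := (lt_conjF_iff hf hB).mpr (lt_of_le_of_lt h h2)
  omega

lemma conjF_eq_zero {f : ℕ → ℕ} (hf : Antitone f) {B : ℕ} (hB : f B = 0) {j : ℕ}
    (hj : f 0 ≤ j) : conjF f j = 0 := by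
  by_contra h
  have : 0 < conjF f j := by omega
  have := (lt_conjF_iff hf hB).mp this
  omega

lemma conjF_conjF {f : ℕ → ℕ} (hf : Antitone f) {B : ℕ} (hB : f B = 0) :
    conjF (conjF f) = f := by
  funext i
  have hca := conjF_antitone hf hB
  have hcb : conjF f (f 0) = 0 := conjF_eq_zero hf hB le_rfl
  have key : ∀ x, x < conjF (conjF f) i ↔ x < f i := by
    intro x
    rw [lt_conjF_iff hca hcb]
    exact lt_conjF_iff hf hB
  have h1 := key (f i)
  have h2 := key (conjF (conjF f) i)
  omega

lemma conjF_le_of_supp {f : ℕ → ℕ} {a : ℕ} (hsupp : ∀ i, a ≤ i → f i = 0) (j : ℕ) :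
    conjF f j ≤ a := by
  have h1 : {i : ℕ | j < f i} ⊆ Set.Iio a := by
    intro i hi
    simp only [Set.mem_setOf_eq] at hi
    simp only [Set.mem_Iio]
    by_contra h
    rw [hsupp i (by omega)] at hi
    omega
  have := Set.ncard_le_ncard h1 (Set.finite_Iio a)
  rw [ncard_Iio] at this
  exact this

lemma conjF_eq_card_filter {f : ℕ → ℕ} (hf : Antitone f) {B : ℕ} (hB : f B = 0) (j : ℕ) :
    conjF f j = ((Finset.range B).filter (fun i => j < f i)).card := by
  rw [conjF, ← Set.ncard_coe_finset]
  congr 1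
  ext i
  simp only [Set.mem_setOf_eq, Finset.coe_filter, Finset.mem_range]
  constructor
  · intro hi
    refine ⟨?_, hi⟩
    by_contra h
    have : f i ≤ f B := hf (by omega)
    omega
  · exact fun h => h.2

lemma sum_conjF {f : ℕ → ℕ} (hf : Antitone f) {B M : ℕ} (hB : f B = 0) (hM : f 0 ≤ M) :
    ∑ j ∈ Finset.range M, conjF f j = ∑ i ∈ Finset.range B, f i := by
  have h1 : ∀ j, conjF f j = ((Finset.range B).filter (fun i => j < f i)).card :=
    conjF_eq_card_filter hf hB
  calc ∑ j ∈ Finset.range M, conjF f j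
      = ∑ j ∈ Finset.range M, ∑ i ∈ Finset.range B, (if j < f i then 1 else 0) := by
        refine Finset.sum_congr rfl (fun j _ => ?_)
        rw [h1 j, Finset.card_filter]
    _ = ∑ i ∈ Finset.range B, ∑ j ∈ Finset.range M, (if j < f i then 1 else 0) :=
        Finset.sum_comm
    _ = ∑ i ∈ Finset.range B, f i := by
        refine Finset.sum_congr rfl (fun i _ => ?_)
        rw [← Finset.card_filter]
        have : (Finset.range M).filter (fun j => j < f i) = Finset.range (f i) := by
          ext j
          simp only [Finset.mem_filter, Finset.mem_range]
          have : f i ≤ f 0 := hf (Nat.zero_le i)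
          omega
        rw [this, Finset.card_range]

open Multiset Finset

def cpM (m : Multiset ℕ) : ℕ → ℕ := fun j => m.countP (fun x => j < x)

noncomputable def mToF (m : Multiset ℕ) : ℕ → ℕ := conjF (cpM m)

def fToM (f : ℕ → ℕ) (B : ℕ) : Multiset ℕ := ((Multiset.range B).map f).filter (fun x => 0 < x)

lemma cpM_antitone (m : Multiset ℕ) : Antitone (cpM m) := by
  intro j j' hjj
  induction m using Multiset.induction_on with
  | empty => simp [cpM]
  | cons a s ih =>
    simp only [cpM, Multiset.countP_cons] at *
    have : (if j' < a then 1 else 0) ≤ (if j < a then 1 else 0) := by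
      split <;> split <;> omega
    omega

lemma cpM_bound (m : Multiset ℕ) : cpM m m.sum = 0 := by
  rw [cpM, Multiset.countP_eq_zero]
  intro x hx
  have : x ≤ m.sum := Multiset.single_le_sum (fun y _ => Nat.zero_le y) x hx
  omega

lemma cpM_count (m : Multiset ℕ) (n : ℕ) : cpM m n = m.count (n + 1) + cpM m (n + 1) := by
  induction m using Multiset.induction_on with
  | empty => simp [cpM]
  | cons a s ih =>
    simp only [cpM, Multiset.countP_cons, Multiset.count_cons] at *
    have : (if n < a then 1 else 0) = (if n + 1 = a then 1 else 0) + (if n + 1 < a then 1 else 0) := by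
      split <;> split <;> split <;> omega
    omega

lemma multiset_eq_of_cpM {m m' : Multiset ℕ} (hm : ∀ x ∈ m, 0 < x) (hm' : ∀ x ∈ m', 0 < x)
    (h : ∀ j, cpM m j = cpM m' j) : m = m' := by
  ext n
  match n with
  | 0 =>
    rw [Multiset.count_eq_zero_of_notMem, Multiset.count_eq_zero_of_notMem]
    · intro hmem; exact absurd (hm' 0 hmem) (by omega)
    · intro hmem; exact absurd (hm 0 hmem) (by omega)
  | Nat.succ k =>
    show m.count (k+1) = m'.count (k+1)
    have h1 := cpM_count m k
    have h2 := cpM_count m' k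
    have h3 := h k
    have h4 := h (k + 1)
    omega

lemma cpM_fToM {f : ℕ → ℕ} (hf : Antitone f) {B : ℕ} (hB : f B = 0) :
    cpM (fToM f B) = conjF f := by
  funext j
  rw [cpM, fToM, Multiset.countP_filter, conjF_eq_card_filter hf hB]
  rw [Multiset.countP_map]
  have h2 : Multiset.filter (fun a => j < f a ∧ 0 < f a) (Multiset.range B)
      = Multiset.filter (fun i => j < f i) (Multiset.range B) := by
    apply Multiset.filter_congr
    intro x _
    constructor
    · exact fun h => h.1
    · exact fun h => ⟨h, by omega⟩
  rw [h2]
  conv_rhs => rw [Finset.card, Finset.filter_val, Finset.range_val]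

lemma fToM_pos {f : ℕ → ℕ} {B : ℕ} : ∀ x ∈ fToM f B, 0 < x := by
  intro x hx
  exact (Multiset.mem_filter.mp hx).2

lemma mToF_antitone (m : Multiset ℕ) : Antitone (mToF m) :=
  conjF_antitone (cpM_antitone m) (cpM_bound m)

lemma mToF_bound (m : Multiset ℕ) : ∀ i, cpM m 0 ≤ i → mToF m i = 0 := by
  intro i hi
  have h := conjF_antitone (cpM_antitone m) (cpM_bound m)
  have h0 : conjF (cpM m) (cpM m 0) = 0 := conjF_eq_zero (cpM_antitone m) (cpM_bound m) le_rfl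
  have h1 : conjF (cpM m) i ≤ conjF (cpM m) (cpM m 0) := h hi
  show conjF (cpM m) i = 0
  omega

lemma mToF_fToM {f : ℕ → ℕ} (hf : Antitone f) {B : ℕ} (hB : f B = 0) :
    mToF (fToM f B) = f := by
  rw [mToF, cpM_fToM hf hB, conjF_conjF hf hB]

lemma fToM_mToF {m : Multiset ℕ} (hm : ∀ x ∈ m, 0 < x) {B : ℕ} (hB : mToF m B = 0) :
    fToM (mToF m) B = m := by
  refine multiset_eq_of_cpM fToM_pos hm (fun j => ?_)
  rw [cpM_fToM (mToF_antitone m) hB, mToF, conjF_conjF (cpM_antitone m) (cpM_bound m)]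

lemma fToM_sum {f : ℕ → ℕ} (B : ℕ) : (fToM f B).sum = ∑ i ∈ Finset.range B, f i := by
  have h1 : ((Multiset.range B).map f).sum = ∑ i ∈ Finset.range B, f i := by
    rw [Finset.sum, Finset.range_val]
  rw [← h1]
  have h2 := Multiset.filter_add_not (fun x => 0 < x) ((Multiset.range B).map f)
  have h3 : (Multiset.filter (fun x => ¬ 0 < x) ((Multiset.range B).map f)).sum = 0 := by
    apply Multiset.sum_eq_zero
    intro x hx
    have := (Multiset.mem_filter.mp hx).2
    omega
  calc (fToM f B).sum = (fToM f B).sum + (Multiset.filter (fun x => ¬ 0 < x) ((Multiset.range B).map f)).sum := by rw [h3, add_zero]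
    _ = ((Multiset.range B).map f).sum := by rw [fToM, ← Multiset.sum_add, h2]

noncomputable section

namespace Peel

variable (S : Finset ℕ)

/-- descending-index ascending enumeration: `oN S i` is the `i`-th smallest element of `S`. -/
def oN : ℕ → ℕ := fun i => if h : i < S.card then S.orderEmbOfFin rfl ⟨i, h⟩ else 0

lemma oN_mem {S : Finset ℕ} {i : ℕ} (h : i < S.card) : oN S i ∈ S := by
  rw [oN, dif_pos h]; exact Finset.orderEmbOfFin_mem S rfl _

lemma oN_lt {S : Finset ℕ} {i i' : ℕ} (h : i < i') (h' : i' < S.card) : oN S i < oN S i' := by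
  rw [oN, oN, dif_pos (lt_trans h h'), dif_pos h']
  exact (S.orderEmbOfFin rfl).strictMono (by simp [Fin.lt_def]; omega)

lemma oN_surj {S : Finset ℕ} {x : ℕ} (hx : x ∈ S) : ∃ i < S.card, oN S i = x := by
  have : x ∈ Set.range (S.orderEmbOfFin rfl) := by
    rw [Finset.range_orderEmbOfFin]; exact_mod_cast hx
  obtain ⟨k, hk⟩ := this
  exact ⟨k.val, k.isLt, by rw [oN, dif_pos k.isLt, Fin.eta]; exact hk⟩

lemma oN_diff_le {S : Finset ℕ} {i i' : ℕ} (h : i ≤ i') (h' : i' < S.card) :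
    oN S i + i' ≤ oN S i' + i := by
  induction i' with
  | zero =>
    have h0 : i = 0 := by omega
    subst h0
    omega
  | succ n ih =>
    rcases Nat.lt_or_ge i (n+1) with hlt | hge
    · have h1 : oN S i + n ≤ oN S n + i := ih (by omega) (by omega)
      have h2 : oN S n < oN S (n+1) := oN_lt (by omega) h'
      omega
    · have h0 : i = n + 1 := by omega
      subst h0
      omega

lemma oN_ge {S : Finset ℕ} {i : ℕ} (h : i < S.card) : i ≤ oN S i := by
  have := oN_diff_le (Nat.zero_le i) h
  omega

/-- the peeled partition (staircase removed), reversed to be weakly decreasing -/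
def XfS : ℕ → ℕ := fun i => if i < S.card then oN S (S.card - 1 - i) - (S.card - 1 - i) else 0

lemma XfS_supp {i : ℕ} (h : S.card ≤ i) : XfS S i = 0 := by
  rw [XfS, if_neg (by omega)]

lemma XfS_bound : XfS S S.card = 0 := XfS_supp S le_rfl

lemma XfS_antitone : Antitone (XfS S) := by
  intro i i' hii
  rcases Nat.lt_or_ge i' S.card with h' | h'
  · have hi : i < S.card := by omega
    have e1 : XfS S i' = oN S (S.card - 1 - i') - (S.card - 1 - i') := if_pos h'
    have e2 : XfS S i = oN S (S.card - 1 - i) - (S.card - 1 - i) := if_pos hi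
    have := oN_diff_le (S := S) (show S.card - 1 - i' ≤ S.card - 1 - i by omega)
      (show S.card - 1 - i < S.card by omega)
    omega
  · rw [XfS_supp S h']
    exact Nat.zero_le _

/-- number of elements of `S` smaller than `s` -/
def below (s : ℕ) : ℕ := (S.filter (· < s)).card

lemma below_oN {S : Finset ℕ} {k : ℕ} (h : k < S.card) : below S (oN S k) = k := by
  have himg : S.filter (· < oN S k) = (Finset.range k).image (oN S) := by
    ext x
    simp only [Finset.mem_filter, Finset.mem_image, Finset.mem_range]
    constructor
    · rintro ⟨hxS, hxlt⟩
      obtain ⟨i, hi, rfl⟩ := oN_surj hxS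
      refine ⟨i, ?_, rfl⟩
      by_contra hik
      have hik' : k ≤ i := by omega
      have : oN S k ≤ oN S i := by
        rcases Nat.eq_or_lt_of_le hik' with heq | hlt
        · exact le_of_eq (by rw [heq])
        · exact le_of_lt (oN_lt hlt hi)
      omega
    · rintro ⟨i, hik, rfl⟩
      exact ⟨oN_mem (by omega), oN_lt hik h⟩
  rw [below, himg, Finset.card_image_of_injOn, Finset.card_range]
  intro x hx y hy hxy
  simp only [Finset.coe_range, Set.mem_Iio] at hx hy
  by_contra hne
  rcases Nat.lt_or_ge x y with hl | hg
  · exact absurd hxy (Nat.ne_of_lt (oN_lt hl (by omega)))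
  · exact absurd hxy.symm (Nat.ne_of_lt (oN_lt (by omega) (by omega)))

/-- the "inner" column-count function -/
def innerS : ℕ → ℕ := fun j => (S.filter (fun s => j + below S s < s)).card

lemma innerS_antitone : Antitone (innerS S) := by
  intro j j' h
  apply Finset.card_le_card
  apply Finset.monotone_filter_right
  intro s hs
  omega

lemma innerS_bound : innerS S (S.sup id) = 0 := by
  rw [innerS, Finset.card_eq_zero, Finset.filter_eq_empty_iff]
  intro s hs
  have : s ≤ S.sup id := Finset.le_sup (f := id) hs
  omega

lemma innerS_eq_conjF_XfS : innerS S = conjF (XfS S) := by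
  funext j
  rw [conjF_eq_card_filter (XfS_antitone S) (XfS_bound S)]
  rw [innerS]
  have himg : S.filter (fun s => j + below S s < s)
      = ((Finset.range S.card).image (fun k => oN S k)).filter (fun s => j + below S s < s) := by
    congr 1
    ext x
    simp only [Finset.mem_image, Finset.mem_range]
    constructor
    · intro hx
      obtain ⟨i, hi, rfl⟩ := oN_surj hx
      exact ⟨i, hi, rfl⟩
    · rintro ⟨i, hi, rfl⟩
      exact oN_mem hi
  rw [himg, Finset.filter_image, Finset.card_image_of_injOn]
  · -- now counting over range S.card
    have hcongr : ∀ k ∈ Finset.range S.card,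
        (j + below S (oN S k) < oN S k) ↔ (j < XfS S (S.card - 1 - k)) := by
      intro k hk
      rw [Finset.mem_range] at hk
      rw [below_oN hk, XfS, if_pos (show S.card - 1 - k < S.card by omega)]
      have h1 : S.card - 1 - (S.card - 1 - k) = k := by omega
      rw [h1]
      have := oN_ge hk
      omega
    rw [Finset.filter_congr hcongr]
    -- reflect
    have hrefl : ∀ p : ℕ → Prop, ∀ _ : DecidablePred p,
        ((Finset.range S.card).filter (fun k => p (S.card - 1 - k))).card
        = ((Finset.range S.card).filter p).card := by
      intro p _
      rw [Finset.card_filter, Finset.card_filter]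
      exact Finset.sum_range_reflect (fun k => if p k then 1 else 0) S.card
    exact hrefl (fun k => j < XfS S k) _
  · intro x hx y hy hxy
    simp only [Finset.coe_filter, Set.mem_setOf_eq, Finset.mem_range] at hx hy
    by_contra hne
    rcases Nat.lt_or_ge x y with hl | hg
    · exact absurd hxy (Nat.ne_of_lt (oN_lt hl hy.1))
    · exact absurd hxy.symm (Nat.ne_of_lt (oN_lt (by omega) hx.1))

/-- the peel map -/
def peelF : ℕ → ℕ := conjF (innerS S)

lemma peelF_eq_XfS : peelF S = XfS S := by
  rw [peelF, innerS_eq_conjF_XfS, conjF_conjF (XfS_antitone S) (XfS_bound S)]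

/-- the inverse map -/
def unpeel (a : ℕ) (d : ℕ → ℕ) : Finset ℕ := (Finset.range a).image (fun i => d (a - 1 - i) + i)

lemma unpeel_inj {a : ℕ} {d : ℕ → ℕ} (hd : Antitone d) :
    ∀ x ∈ Finset.range a, ∀ y ∈ Finset.range a,
      d (a - 1 - x) + x = d (a - 1 - y) + y → x = y := by
  intro x hx y hy hxy
  rw [Finset.mem_range] at hx hy
  by_contra hne
  rcases Nat.lt_or_ge x y with hl | hg
  · have := hd (show a - 1 - y ≤ a - 1 - x by omega)
    omega
  · have := hd (show a - 1 - x ≤ a - 1 - y by omega)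
    omega

lemma unpeel_card {a : ℕ} {d : ℕ → ℕ} (hd : Antitone d) : (unpeel a d).card = a := by
  rw [unpeel, Finset.card_image_of_injOn, Finset.card_range]
  intro x hx y hy hxy
  exact unpeel_inj hd x (by simpa using hx) y (by simpa using hy) hxy


lemma XfS_key {S : Finset ℕ} {i : ℕ} (hi : i < S.card) :
    XfS S (S.card - 1 - i) + i = oN S i := by
  rw [XfS, if_pos (show S.card - 1 - i < S.card by omega)]
  have h1 : S.card - 1 - (S.card - 1 - i) = i := by omega
  rw [h1]
  have := oN_ge hi
  omega

lemma unpeel_peel : unpeel S.card (peelF S) = S := by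
  rw [peelF_eq_XfS, unpeel]
  ext x
  simp only [Finset.mem_image, Finset.mem_range]
  constructor
  · rintro ⟨i, hi, rfl⟩
    rw [XfS_key hi]
    exact oN_mem hi
  · intro hx
    obtain ⟨i, hi, rfl⟩ := oN_surj hx
    exact ⟨i, hi, XfS_key hi⟩

lemma oN_eq_of {S : Finset ℕ} {a : ℕ} (hcard : S.card = a) {g : ℕ → ℕ}
    (hmem : ∀ i, i < a → g i ∈ S) (hmono : ∀ i i', i < i' → i' < a → g i < g i') :
    ∀ i, i < a → oN S i = g i := by
  subst hcard
  have hf : (fun k : Fin S.card => g k.val) = ⇑(S.orderEmbOfFin rfl) := by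
    apply Finset.orderEmbOfFin_unique rfl (fun k => hmem _ k.isLt)
    intro k k' hkk
    exact hmono _ _ hkk k'.isLt
  intro i hi
  rw [oN, dif_pos hi]
  exact (congrFun hf ⟨i, hi⟩).symm

lemma peel_unpeel {a : ℕ} {d : ℕ → ℕ} (hd : Antitone d) (hsupp : ∀ i, a ≤ i → d i = 0) :
    peelF (unpeel a d) = d := by
  have hcard : (unpeel a d).card = a := unpeel_card hd
  have hmem : ∀ i, i < a → d (a - 1 - i) + i ∈ unpeel a d := by
    intro i hi
    rw [unpeel]
    exact Finset.mem_image.mpr ⟨i, Finset.mem_range.mpr hi, rfl⟩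
  have hmono : ∀ i i', i < i' → i' < a → d (a - 1 - i) + i < d (a - 1 - i') + i' := by
    intro i i' h h'
    have := hd (show a - 1 - i' ≤ a - 1 - i by omega)
    omega
  have hoN := oN_eq_of hcard hmem hmono
  rw [peelF_eq_XfS]
  funext i
  rcases Nat.lt_or_ge i a with hi | hi
  · rw [XfS, if_pos (by omega : i < (unpeel a d).card), hcard]
    rw [hoN (a - 1 - i) (by omega)]
    have h1 : a - 1 - (a - 1 - i) = i := by omega
    rw [h1]
    omega
  · rw [XfS, if_neg (by omega), hsupp i hi]

lemma sum_peel : ∑ s ∈ S, (2 * s + 1) = S.card * S.card + 2 * ∑ i ∈ Finset.range S.card, peelF S i := by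
  rw [peelF_eq_XfS]
  have himg : S = (Finset.range S.card).image (oN S) := by
    ext x
    simp only [Finset.mem_image, Finset.mem_range]
    constructor
    · intro hx
      obtain ⟨i, hi, rfl⟩ := oN_surj hx
      exact ⟨i, hi, rfl⟩
    · rintro ⟨i, hi, rfl⟩
      exact oN_mem hi
  have hinj : ∀ x ∈ Finset.range S.card, ∀ y ∈ Finset.range S.card, oN S x = oN S y → x = y := by
    intro x hx y hy hxy
    rw [Finset.mem_range] at hx hy
    by_contra hne
    rcases Nat.lt_or_ge x y with hl | hg
    · exact absurd hxy (Nat.ne_of_lt (oN_lt hl hy))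
    · exact absurd hxy.symm (Nat.ne_of_lt (oN_lt (by omega) hx))
  conv_lhs => rw [himg]
  rw [Finset.sum_image hinj]
  have hterm : ∀ i ∈ Finset.range S.card,
      2 * oN S i + 1 = 2 * (XfS S (S.card - 1 - i) + i) + 1 := by
    intro i hi
    rw [Finset.mem_range] at hi
    rw [XfS_key hi]
  rw [Finset.sum_congr rfl hterm]
  have hsplit : ∑ i ∈ Finset.range S.card, (2 * (XfS S (S.card - 1 - i) + i) + 1)
      = 2 * (∑ i ∈ Finset.range S.card, XfS S (S.card - 1 - i))
        + 2 * (∑ i ∈ Finset.range S.card, i) + S.card := by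
    have hx : ∀ i : ℕ, 2 * (XfS S (S.card - 1 - i) + i) + 1
        = (2 * XfS S (S.card - 1 - i) + 2 * i) + 1 := fun i => by ring
    simp only [hx]
    rw [Finset.sum_add_distrib, Finset.sum_add_distrib, Finset.sum_const, Finset.card_range,
      smul_eq_mul, mul_one, ← Finset.mul_sum, ← Finset.mul_sum]
  rw [hsplit, Finset.sum_range_reflect]
  have hG : (∑ i ∈ Finset.range S.card, i) * 2 = S.card * (S.card - 1) := Finset.sum_range_id_mul_two S.card
  have hq : S.card * (S.card - 1) + S.card = S.card * S.card := by
    cases S.card with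
    | zero => simp
    | succ n => simp [Nat.succ_sub_one]; ring
  omega

end Peel

noncomputable section

/-- weight of a partition-function -/
def wF (f : ℕ → ℕ) : ℕ := ∑ᶠ i, f i

lemma wF_eq {f : ℕ → ℕ} (hf : Antitone f) {B : ℕ} (hB : f B = 0) :
    wF f = ∑ i ∈ Finset.range B, f i := by
  apply finsum_eq_sum_of_support_subset
  intro x hx
  simp only [Function.mem_support] at hx
  simp only [Finset.coe_range, Set.mem_Iio]
  by_contra h
  have := hf (show B ≤ x by omega)
  omega

namespace Durfee

def mu (a c : ℕ) (d e : ℕ → ℕ) : ℕ → ℕ := fun j => if j < c then e j + a else conjF d (j - c)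

variable {a c : ℕ} {d e : ℕ → ℕ}

section
variable (hd : Antitone d) (hds : ∀ i, a ≤ i → d i = 0)
  (he : Antitone e) (hes : ∀ j, c ≤ j → e j = 0)

include hd hds

lemma conjFd_le : ∀ j, conjF d j ≤ a := conjF_le_of_supp hds

include he hes

lemma mu_antitone : Antitone (mu a c d e) := by
  intro j j' hjj
  rcases Nat.lt_or_ge j' c with h' | h'
  · have hj : j < c := by omega
    simp only [mu, if_pos h', if_pos hj]
    have := he hjj
    omega
  · rcases Nat.lt_or_ge j c with hj | hj
    · simp only [mu, if_pos hj, if_neg (show ¬ j' < c by omega)]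
      have := conjF_le_of_supp hds (j' - c)
      omega
    · simp only [mu, if_neg (show ¬ j < c by omega), if_neg (show ¬ j' < c by omega)]
      exact conjF_antitone hd (hds a le_rfl) (show j - c ≤ j' - c by omega)

lemma mu_bound : mu a c d e (c + d 0) = 0 := by
  simp only [mu, if_neg (show ¬ c + d 0 < c by omega)]
  have h1 : c + d 0 - c = d 0 := by omega
  rw [h1]
  exact conjF_eq_zero hd (hds a le_rfl) le_rfl

lemma mu_char : ∀ j : ℕ, (j : ℤ) + ((a : ℤ) - (c : ℤ)) < (mu a c d e j : ℤ) ↔ j < c := by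
  intro j
  rcases Nat.lt_or_ge j c with hj | hj
  · simp only [mu, if_pos hj]
    constructor
    · intro _; exact hj
    · intro _
      push_cast
      omega
  · simp only [mu, if_neg (show ¬ j < c by omega)]
    have h1 : conjF d (j - c) ≤ a := conjF_le_of_supp hds (j - c)
    constructor
    · intro h
      exfalso
      have : ((conjF d (j - c) : ℤ)) ≤ (a : ℤ) := by exact_mod_cast h1
      omega
    · intro h; omega

end

/-- recovery of the Durfee index -/
def cOf (k : ℤ) (μ : ℕ → ℕ) : ℕ := {j : ℕ | (j : ℤ) + k < (μ j : ℤ)}.ncard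

lemma lt_cOf_iff {k : ℤ} {μ : ℕ → ℕ} (hμ : Antitone μ) {B : ℕ} (hB : μ B = 0) (j : ℕ) :
    j < cOf k μ ↔ (j : ℤ) + k < (μ j : ℤ) := by
  have hdc : ∀ ⦃i j' : ℕ⦄, i ≤ j' → j' ∈ {j : ℕ | (j : ℤ) + k < (μ j : ℤ)}
      → i ∈ {j : ℕ | (j : ℤ) + k < (μ j : ℤ)} := by
    intro i j' hij hj'
    simp only [Set.mem_setOf_eq] at *
    have h1 : μ j' ≤ μ i := hμ hij
    have h2 : (μ j' : ℤ) ≤ (μ i : ℤ) := by exact_mod_cast h1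
    omega
  have hb : ∀ i ∈ {j : ℕ | (j : ℤ) + k < (μ j : ℤ)}, i < B + (-k).toNat := by
    intro i hi
    simp only [Set.mem_setOf_eq] at hi
    rcases Nat.lt_or_ge i B with h | h
    · omega
    · have h1 : μ i ≤ μ B := hμ h
      rw [hB] at h1
      have h2 : μ i = 0 := by omega
      rw [h2] at hi
      norm_num at hi
      omega
  exact (mem_iff_lt_ncard hdc hb j).symm

end Durfee

namespace Durfee

variable {a c : ℕ} {d e : ℕ → ℕ}

def aOf (k : ℤ) (μ : ℕ → ℕ) : ℕ := ((cOf k μ : ℤ) + k).toNat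

def eOf (k : ℤ) (μ : ℕ → ℕ) : ℕ → ℕ := fun j => if j < cOf k μ then μ j - aOf k μ else 0

def dOf (k : ℤ) (μ : ℕ → ℕ) : ℕ → ℕ := conjF (fun j => μ (j + cOf k μ))

section RT1

variable (hd : Antitone d) (hds : ∀ i, a ≤ i → d i = 0)
  (he : Antitone e) (hes : ∀ j, c ≤ j → e j = 0)

include hd hds he hes

lemma cOf_mu : cOf ((a : ℤ) - (c : ℤ)) (mu a c d e) = c := by
  rw [cOf]
  have hset : {j : ℕ | (j : ℤ) + ((a : ℤ) - (c : ℤ)) < (mu a c d e j : ℤ)} = Set.Iio c := by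
    ext j
    simp only [Set.mem_setOf_eq, Set.mem_Iio]
    exact mu_char hd hds he hes j
  rw [hset, ncard_Iio]

lemma aOf_mu : aOf ((a : ℤ) - (c : ℤ)) (mu a c d e) = a := by
  rw [aOf, cOf_mu hd hds he hes]
  omega

lemma eOf_mu : eOf ((a : ℤ) - (c : ℤ)) (mu a c d e) = e := by
  funext j
  rw [eOf, cOf_mu hd hds he hes, aOf_mu hd hds he hes]
  rcases Nat.lt_or_ge j c with hj | hj
  · rw [if_pos hj]
    simp only [mu, if_pos hj]
    omega
  · rw [if_neg (by omega), hes j hj]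

lemma dOf_mu : dOf ((a : ℤ) - (c : ℤ)) (mu a c d e) = d := by
  rw [dOf, cOf_mu hd hds he hes]
  have hshift : (fun j => mu a c d e (j + c)) = conjF d := by
    funext j
    simp only [mu, if_neg (show ¬ j + c < c by omega)]
    congr 1
    omega
  rw [hshift]
  exact conjF_conjF hd (hds a le_rfl)

lemma wF_mu : wF (mu a c d e) = c * a + wF e + wF d := by
  rw [wF_eq (mu_antitone hd hds he hes) (mu_bound hd hds he hes)]
  rw [Finset.range_eq_Ico, ← Finset.sum_Ico_consecutive _ (Nat.zero_le c) (Nat.le_add_right c (d 0))]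
  have h1 : ∑ j ∈ Finset.Ico 0 c, mu a c d e j = wF e + c * a := by
    rw [← Finset.range_eq_Ico]
    have : ∀ j ∈ Finset.range c, mu a c d e j = e j + a := by
      intro j hj
      rw [Finset.mem_range] at hj
      simp only [mu, if_pos hj]
    rw [Finset.sum_congr rfl this, Finset.sum_add_distrib, Finset.sum_const, Finset.card_range,
      smul_eq_mul, wF_eq he (hes c le_rfl)]
  have h2 : ∑ j ∈ Finset.Ico c (c + d 0), mu a c d e j = wF d := by
    have : ∀ j ∈ Finset.Ico c (c + d 0), mu a c d e j = conjF d (j - c) := by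
      intro j hj
      rw [Finset.mem_Ico] at hj
      simp only [mu, if_neg (show ¬ j < c by omega)]
    rw [Finset.sum_congr rfl this, Finset.sum_Ico_eq_sum_range]
    have h3 : ∀ i ∈ Finset.range (c + d 0 - c), conjF d (c + i - c) = conjF d i := by
      intro i _
      congr 1
      omega
    rw [Finset.sum_congr rfl h3]
    have h4 : c + d 0 - c = d 0 := by omega
    rw [h4, sum_conjF hd (hds a le_rfl) le_rfl, wF_eq hd (hds a le_rfl)]
  rw [h1, h2]
  ring

end RT1

section RT2

variable {k : ℤ} {μ : ℕ → ℕ} {B : ℕ}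
variable (hμ : Antitone μ) (hB : μ B = 0)

include hμ hB

lemma cast_aOf : (aOf k μ : ℤ) = (cOf k μ : ℤ) + k := by
  rcases le_or_gt 0 k with hk | hk
  · rw [aOf]; omega
  · have h1 : ∀ j : ℕ, (j : ℤ) < -k → j < cOf k μ := by
      intro j hj
      rw [lt_cOf_iff hμ hB]
      have : (0 : ℤ) ≤ (μ j : ℤ) := by positivity
      omega
    have h2 : (-k).toNat ≤ cOf k μ := by
      by_contra hcon
      have := h1 (cOf k μ) (by omega)
      omega
    rw [aOf]
    omega

lemma mu_c_le : (μ (cOf k μ) : ℤ) ≤ (cOf k μ : ℤ) + k := by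
  have h1 : ¬ (cOf k μ < cOf k μ) := by omega
  rw [lt_cOf_iff (k := k) hμ hB (cOf k μ)] at h1
  omega

lemma mu_ge_a : ∀ j, j < cOf k μ → aOf k μ ≤ μ j := by
  intro j hj
  have h1 : (cOf k μ - 1 : ℕ) < cOf k μ := by omega
  have h2 := (lt_cOf_iff hμ hB (cOf k μ - 1)).mp h1
  have h3 : μ (cOf k μ - 1) ≤ μ j := hμ (by omega)
  have h4 := cast_aOf (k := k) hμ hB
  omega

lemma eOf_antitone : Antitone (eOf k μ) := by
  intro j j' hjj
  rcases Nat.lt_or_ge j' (cOf k μ) with h' | h'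
  · have hj : j < cOf k μ := by omega
    simp only [eOf, if_pos h', if_pos hj]
    have := hμ hjj
    omega
  · simp only [eOf, if_neg (show ¬ j' < cOf k μ by omega)]
    exact Nat.zero_le _

lemma eOf_supp : ∀ j, cOf k μ ≤ j → eOf k μ j = 0 := by
  intro j hj
  simp only [eOf, if_neg (show ¬ j < cOf k μ by omega)]

lemma shift_antitone : Antitone (fun j => μ (j + cOf k μ)) :=
  fun j j' hjj => hμ (by omega)

lemma shift_bound : (fun j => μ (j + cOf k μ)) B = 0 := by
  have : μ (B + cOf k μ) ≤ μ B := hμ (by omega)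
  simp only
  omega

lemma dOf_antitone : Antitone (dOf k μ) :=
  conjF_antitone (shift_antitone hμ hB) (shift_bound hμ hB)

lemma dOf_supp : ∀ i, aOf k μ ≤ i → dOf k μ i = 0 := by
  intro i hi
  rw [dOf]
  apply conjF_eq_zero (shift_antitone hμ hB) (shift_bound hμ hB)
  simp only [Nat.zero_add]
  have h1 := mu_c_le (k := k) hμ hB
  have h2 := cast_aOf (k := k) hμ hB
  omega

lemma mu_recon : mu (aOf k μ) (cOf k μ) (dOf k μ) (eOf k μ) = μ := by
  funext j
  rcases Nat.lt_or_ge j (cOf k μ) with hj | hj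
  · simp only [mu, if_pos hj, eOf, if_pos hj]
    have := mu_ge_a (k := k) hμ hB j hj
    omega
  · simp only [mu, if_neg (show ¬ j < cOf k μ by omega), dOf]
    rw [conjF_conjF (shift_antitone hμ hB) (shift_bound hμ hB)]
    simp only
    congr 1
    omega

end RT2

end Durfee

section PODsplit

def IsPOD' (m : Multiset ℕ) : Prop := (∀ i ∈ m, 0 < i) ∧ ∀ i ∈ m, Odd i → m.count i ≤ 1

def oddHalves (m : Multiset ℕ) : Multiset ℕ := (m.filter (fun x => Odd x)).map (fun x => x / 2)

def evenHalves (m : Multiset ℕ) : Multiset ℕ := (m.filter (fun x => ¬ Odd x)).map (fun x => x / 2)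

def sfToPod (S : Finset ℕ) (f : ℕ → ℕ) (B : ℕ) : Multiset ℕ :=
  S.val.map (fun s => 2 * s + 1) + (fToM f B).map (fun x => 2 * x)

lemma odd_div2 {x : ℕ} (hx : Odd x) : 2 * (x / 2) + 1 = x := by
  obtain ⟨u, hu⟩ := hx
  omega

lemma oddHalves_nodup {m : Multiset ℕ} (hm : IsPOD' m) : (oddHalves m).Nodup := by
  have h1 : (m.filter (fun x => Odd x)).Nodup := by
    rw [Multiset.nodup_iff_count_le_one]
    intro a
    rw [Multiset.count_filter]
    split
    · rename_i ha
      rcases Nat.eq_zero_or_pos (m.count a) with h0 | hpos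
      · omega
      · exact hm.2 a (Multiset.count_pos.mp hpos) ha
    · omega
  apply Multiset.Nodup.map_on _ h1
  intro x hx y hy hxy
  have hox : Odd x := (Multiset.mem_filter.mp hx).2
  have hoy : Odd y := (Multiset.mem_filter.mp hy).2
  have := odd_div2 hox
  have := odd_div2 hoy
  omega

lemma evenHalves_pos {m : Multiset ℕ} (hm : IsPOD' m) : ∀ x ∈ evenHalves m, 0 < x := by
  intro x hx
  rw [evenHalves, Multiset.mem_map] at hx
  obtain ⟨y, hy, rfl⟩ := hx
  rw [Multiset.mem_filter] at hy
  have h1 := hm.1 y hy.1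
  have h2 := hy.2
  rw [Nat.odd_iff] at h2
  omega

lemma sfToPod_recon {m : Multiset ℕ} (hm : IsPOD' m) {B : ℕ}
    (hB : mToF (evenHalves m) B = 0) :
    sfToPod (oddHalves m).toFinset (mToF (evenHalves m)) B = m := by
  rw [sfToPod]
  have hval : (oddHalves m).toFinset.val = oddHalves m := by
    rw [Multiset.toFinset_val, Multiset.dedup_eq_self.mpr (oddHalves_nodup hm)]
  rw [hval]
  have h1 : (oddHalves m).map (fun s => 2 * s + 1) = m.filter (fun x => Odd x) := by
    rw [oddHalves, Multiset.map_map]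
    rw [show (m.filter (fun x => Odd x)) = Multiset.map id (m.filter (fun x => Odd x)) by rw [Multiset.map_id]]
    rw [Multiset.map_map]
    apply Multiset.map_congr rfl
    intro x hx
    simp only [Function.comp_apply, id_eq]
    exact odd_div2 (Multiset.mem_filter.mp hx).2
  have h2 : (fToM (mToF (evenHalves m)) B).map (fun x => 2 * x) = m.filter (fun x => ¬ Odd x) := by
    rw [fToM_mToF (evenHalves_pos hm) hB]
    rw [evenHalves, Multiset.map_map]
    rw [show (m.filter (fun x => ¬ Odd x)) = Multiset.map id (m.filter (fun x => ¬ Odd x)) by rw [Multiset.map_id]]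
    rw [Multiset.map_map]
    apply Multiset.map_congr rfl
    intro x hx
    have hex := (Multiset.mem_filter.mp hx).2
    simp only [Function.comp_apply, id_eq]
    rw [Nat.odd_iff] at hex
    omega
  rw [h1, h2, Multiset.filter_add_not]

lemma sfToPod_isPOD {S : Finset ℕ} {f : ℕ → ℕ} {B : ℕ} : IsPOD' (sfToPod S f B) := by
  constructor
  · intro i hi
    rw [sfToPod, Multiset.mem_add] at hi
    rcases hi with h | h
    · obtain ⟨s, _, rfl⟩ := Multiset.mem_map.mp h
      omega
    · obtain ⟨x, hx, rfl⟩ := Multiset.mem_map.mp h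
      have := fToM_pos x hx
      omega
  · intro i hi hodd
    rw [sfToPod, Multiset.count_add]
    have h2 : ((fToM f B).map (fun x => 2 * x)).count i = 0 := by
      rw [Multiset.count_eq_zero]
      intro hmem
      obtain ⟨x, _, hx2⟩ := Multiset.mem_map.mp hmem
      rw [Nat.odd_iff] at hodd
      omega
    rw [h2, add_zero]
    have h3 : (S.val.map (fun s => 2 * s + 1)).Nodup := by
      apply Multiset.Nodup.map_on _ S.nodup
      intro x _ y _ hxy
      omega
    rw [Multiset.nodup_iff_count_le_one] at h3
    exact h3 i

lemma oddHalves_sfToPod {S : Finset ℕ} {f : ℕ → ℕ} {B : ℕ} :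
    (oddHalves (sfToPod S f B)).toFinset = S := by
  rw [oddHalves, sfToPod, Multiset.filter_add]
  have h1 : (S.val.map (fun s => 2 * s + 1)).filter (fun x => Odd x) = S.val.map (fun s => 2 * s + 1) := by
    rw [Multiset.filter_eq_self]
    intro a ha
    obtain ⟨s, _, rfl⟩ := Multiset.mem_map.mp ha
    exact ⟨s, by omega⟩
  have h2 : ((fToM f B).map (fun x => 2 * x)).filter (fun x => Odd x) = 0 := by
    rw [Multiset.filter_eq_nil]
    intro a ha
    obtain ⟨x, _, rfl⟩ := Multiset.mem_map.mp ha
    rw [Nat.odd_iff]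
    omega
  rw [h1, h2, add_zero, Multiset.map_map]
  have h3 : S.val.map ((fun x => x / 2) ∘ (fun s => 2 * s + 1)) = S.val := by
    rw [show S.val = Multiset.map id S.val by rw [Multiset.map_id]]
    rw [Multiset.map_map]
    apply Multiset.map_congr rfl
    intro x _
    simp only [Function.comp_apply, id_eq]
    omega
  rw [h3, Finset.val_toFinset]

lemma evenHalves_sfToPod {S : Finset ℕ} {f : ℕ → ℕ} {B : ℕ} :
    evenHalves (sfToPod S f B) = fToM f B := by
  rw [evenHalves, sfToPod, Multiset.filter_add]
  have h1 : (S.val.map (fun s => 2 * s + 1)).filter (fun x => ¬ Odd x) = 0 := by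
    rw [Multiset.filter_eq_nil]
    intro a ha
    obtain ⟨s, _, rfl⟩ := Multiset.mem_map.mp ha
    simp only [not_not]
    exact ⟨s, by omega⟩
  have h2 : ((fToM f B).map (fun x => 2 * x)).filter (fun x => ¬ Odd x) = (fToM f B).map (fun x => 2 * x) := by
    rw [Multiset.filter_eq_self]
    intro a ha
    obtain ⟨x, _, rfl⟩ := Multiset.mem_map.mp ha
    rw [Nat.odd_iff]
    omega
  rw [h1, h2, zero_add, Multiset.map_map]
  rw [show fToM f B = Multiset.map id (fToM f B) by rw [Multiset.map_id]]
  rw [Multiset.map_map]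
  apply Multiset.map_congr rfl
  intro x _
  simp only [Function.comp_apply, id_eq]
  omega

lemma mToF_sfToPod {S : Finset ℕ} {f : ℕ → ℕ} {B : ℕ} (hf : Antitone f) (hB : f B = 0) :
    mToF (evenHalves (sfToPod S f B)) = f := by
  rw [evenHalves_sfToPod, mToF_fToM hf hB]

lemma sfToPod_sum {S : Finset ℕ} {f : ℕ → ℕ} {B : ℕ} (hf : Antitone f) (hB : f B = 0) :
    (sfToPod S f B).sum = S.card * S.card + 2 * wF (Peel.peelF S) + 2 * wF f := by
  rw [sfToPod, Multiset.sum_add]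
  have h1 : (S.val.map (fun s => 2 * s + 1)).sum = ∑ s ∈ S, (2 * s + 1) := rfl
  have h2 : ((fToM f B).map (fun x => 2 * x)).sum = 2 * (fToM f B).sum := by
    rw [Multiset.sum_map_mul_left]
    simp [Multiset.map_id']
  rw [h1, h2, Peel.sum_peel, fToM_sum]
  have h3 : wF (Peel.peelF S) = ∑ i ∈ Finset.range S.card, Peel.peelF S i := by
    apply wF_eq
    · rw [Peel.peelF_eq_XfS]; exact Peel.XfS_antitone S
    · rw [Peel.peelF_eq_XfS]; exact Peel.XfS_bound S
  have h4 : wF f = ∑ i ∈ Finset.range B, f i := wF_eq hf hB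
  rw [h3, h4]

end PODsplit

section Assembly

namespace Peel

lemma peelF_antitone (S : Finset ℕ) : Antitone (peelF S) := by
  rw [peelF_eq_XfS]; exact XfS_antitone S

lemma peelF_supp (S : Finset ℕ) : ∀ i, S.card ≤ i → peelF S i = 0 := by
  intro i hi
  rw [peelF_eq_XfS]; exact XfS_supp S hi

end Peel

noncomputable def bnd (f : ℕ → ℕ) : ℕ := sInf {B | f B = 0}

lemma bnd_spec {f : ℕ → ℕ} (h : ∃ B, f B = 0) : f (bnd f) = 0 := Nat.sInf_mem h

noncomputable def podF (m : Multiset ℕ) : ℕ → ℕ := mToF (evenHalves m)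

lemma podF_antitone (m : Multiset ℕ) : Antitone (podF m) := mToF_antitone _

lemma podF_bound (m : Multiset ℕ) : ∃ B, podF m B = 0 :=
  ⟨_, mToF_bound _ _ le_rfl⟩

lemma pod_sum {m : Multiset ℕ} (hm : IsPOD' m) :
    m.sum = (oddHalves m).toFinset.card * (oddHalves m).toFinset.card
      + 2 * wF (Peel.peelF (oddHalves m).toFinset) + 2 * wF (podF m) := by
  conv_lhs => rw [← sfToPod_recon hm (bnd_spec (podF_bound m))]
  exact sfToPod_sum (podF_antitone m) (bnd_spec (podF_bound m))

noncomputable def podK (m₁ m₂ : Multiset ℕ) : ℤ :=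
  ((oddHalves m₁).toFinset.card : ℤ) - ((oddHalves m₂).toFinset.card : ℤ)

noncomputable def podMu (m₁ m₂ : Multiset ℕ) : ℕ → ℕ :=
  Durfee.mu (oddHalves m₁).toFinset.card (oddHalves m₂).toFinset.card
    (Peel.peelF (oddHalves m₁).toFinset) (Peel.peelF (oddHalves m₂).toFinset)

noncomputable def fwdRaw (x : Multiset ℕ × Multiset ℕ) : ℤ × ((ℕ → ℕ) × (ℕ → ℕ) × (ℕ → ℕ)) :=
  (podK x.1 x.2, (podMu x.1 x.2, podF x.1, podF x.2))

noncomputable def bwdRaw (y : ℤ × ((ℕ → ℕ) × (ℕ → ℕ) × (ℕ → ℕ))) : Multiset ℕ × Multiset ℕ :=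
  (sfToPod (Peel.unpeel (Durfee.aOf y.1 y.2.1) (Durfee.dOf y.1 y.2.1)) y.2.2.1 (bnd y.2.2.1),
   sfToPod (Peel.unpeel (Durfee.cOf y.1 y.2.1) (Durfee.eOf y.1 y.2.1)) y.2.2.2 (bnd y.2.2.2))

def XP (N : ℕ) (x : Multiset ℕ × Multiset ℕ) : Prop :=
  IsPOD' x.1 ∧ IsPOD' x.2 ∧ x.1.sum + x.2.sum = N

def YP (N : ℕ) (y : ℤ × ((ℕ → ℕ) × (ℕ → ℕ) × (ℕ → ℕ))) : Prop :=
  (Antitone y.2.1 ∧ ∃ B, y.2.1 B = 0) ∧ (Antitone y.2.2.1 ∧ ∃ B, y.2.2.1 B = 0)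
  ∧ (Antitone y.2.2.2 ∧ ∃ B, y.2.2.2 B = 0)
  ∧ y.1 ^ 2 + 2 * ((wF y.2.1 : ℤ) + (wF y.2.2.1 : ℤ) + (wF y.2.2.2 : ℤ)) = (N : ℤ)

lemma fwd_prop {N : ℕ} {x : Multiset ℕ × Multiset ℕ} (hx : XP N x) : YP N (fwdRaw x) := by
  obtain ⟨m₁, m₂⟩ := x
  obtain ⟨hm₁, hm₂, hsum⟩ := hx
  simp only at hm₁ hm₂ hsum
  refine ⟨?_, ?_, ?_, ?_⟩
  · exact ⟨Durfee.mu_antitone (Peel.peelF_antitone _) (Peel.peelF_supp _)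
        (Peel.peelF_antitone _) (Peel.peelF_supp _),
      ⟨_, Durfee.mu_bound (Peel.peelF_antitone _) (Peel.peelF_supp _)
        (Peel.peelF_antitone _) (Peel.peelF_supp _)⟩⟩
  · exact ⟨podF_antitone _, podF_bound _⟩
  · exact ⟨podF_antitone _, podF_bound _⟩
  · have hμw : (wF (podMu m₁ m₂) : ℤ)
        = ((oddHalves m₂).toFinset.card : ℤ) * ((oddHalves m₁).toFinset.card : ℤ)
          + (wF (Peel.peelF (oddHalves m₂).toFinset) : ℤ)
          + (wF (Peel.peelF (oddHalves m₁).toFinset) : ℤ) := by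
      rw [podMu, Durfee.wF_mu (Peel.peelF_antitone _) (Peel.peelF_supp _)
        (Peel.peelF_antitone _) (Peel.peelF_supp _)]
      push_cast
      ring
    have h1 : (m₁.sum : ℤ) = ((oddHalves m₁).toFinset.card : ℤ) * ((oddHalves m₁).toFinset.card : ℤ)
        + 2 * (wF (Peel.peelF (oddHalves m₁).toFinset) : ℤ) + 2 * (wF (podF m₁) : ℤ) := by
      rw [pod_sum hm₁]; push_cast; ring
    have h2 : (m₂.sum : ℤ) = ((oddHalves m₂).toFinset.card : ℤ) * ((oddHalves m₂).toFinset.card : ℤ)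
        + 2 * (wF (Peel.peelF (oddHalves m₂).toFinset) : ℤ) + 2 * (wF (podF m₂) : ℤ) := by
      rw [pod_sum hm₂]; push_cast; ring
    have hN : (m₁.sum : ℤ) + (m₂.sum : ℤ) = (N : ℤ) := by exact_mod_cast congrArg Nat.cast hsum
    show (fwdRaw (m₁, m₂)).1 ^ 2 + _ = _
    simp only [fwdRaw, podK]
    linear_combination 2 * hμw + hN - h1 - h2

lemma bwd_prop {N : ℕ} {y : ℤ × ((ℕ → ℕ) × (ℕ → ℕ) × (ℕ → ℕ))} (hy : YP N y) : XP N (bwdRaw y) := by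
  obtain ⟨k, μ, f₁, f₂⟩ := y
  obtain ⟨hμ, hf₁, hf₂, hw⟩ := hy
  simp only at hμ hf₁ hf₂ hw
  refine ⟨sfToPod_isPOD, sfToPod_isPOD, ?_⟩
  have hB : μ (bnd μ) = 0 := bnd_spec hμ.2
  have hμa := hμ.1
  have hda := Durfee.dOf_antitone (k := k) hμa hB
  have hds := Durfee.dOf_supp (k := k) hμa hB
  have hea := Durfee.eOf_antitone (k := k) hμa hB
  have hes := Durfee.eOf_supp (k := k) hμa hB
  have hsum₁ := sfToPod_sum (S := Peel.unpeel (Durfee.aOf k μ) (Durfee.dOf k μ))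
    (f := f₁) hf₁.1 (bnd_spec hf₁.2)
  have hsum₂ := sfToPod_sum (S := Peel.unpeel (Durfee.cOf k μ) (Durfee.eOf k μ))
    (f := f₂) hf₂.1 (bnd_spec hf₂.2)
  rw [Peel.unpeel_card hda] at hsum₁
  rw [Peel.unpeel_card hea] at hsum₂
  rw [Peel.peel_unpeel hda hds] at hsum₁
  rw [Peel.peel_unpeel hea hes] at hsum₂
  have hμw : wF μ = Durfee.cOf k μ * Durfee.aOf k μ + wF (Durfee.eOf k μ) + wF (Durfee.dOf k μ) := by
    conv_lhs => rw [← Durfee.mu_recon (k := k) hμa hB]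
    exact Durfee.wF_mu hda hds hea hes
  have hμw' : (wF μ : ℤ) = (Durfee.cOf k μ : ℤ) * (Durfee.aOf k μ : ℤ)
      + (wF (Durfee.eOf k μ) : ℤ) + (wF (Durfee.dOf k μ) : ℤ) := by
    exact_mod_cast congrArg Nat.cast hμw
  have hka := Durfee.cast_aOf (k := k) hμa hB
  have goal' : ((bwdRaw (k, μ, f₁, f₂)).1.sum : ℤ) + ((bwdRaw (k, μ, f₁, f₂)).2.sum : ℤ) = (N : ℤ) := by
    rw [bwdRaw]
    simp only
    rw [hsum₁, hsum₂]
    push_cast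
    linear_combination hw - 2 * hμw'
      + ((Durfee.aOf k μ : ℤ) - (Durfee.cOf k μ : ℤ) + k) * hka
  exact_mod_cast goal'

lemma bwd_fwd {N : ℕ} {x : Multiset ℕ × Multiset ℕ} (hx : XP N x) : bwdRaw (fwdRaw x) = x := by
  obtain ⟨m₁, m₂⟩ := x
  obtain ⟨hm₁, hm₂, _⟩ := hx
  simp only at hm₁ hm₂
  have hd := Peel.peelF_antitone (oddHalves m₁).toFinset
  have hds := Peel.peelF_supp (oddHalves m₁).toFinset
  have he := Peel.peelF_antitone (oddHalves m₂).toFinset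
  have hes := Peel.peelF_supp (oddHalves m₂).toFinset
  simp only [bwdRaw, fwdRaw, podK, podMu, podF]
  rw [Durfee.aOf_mu hd hds he hes, Durfee.dOf_mu hd hds he hes,
    Durfee.cOf_mu hd hds he hes, Durfee.eOf_mu hd hds he hes,
    Peel.unpeel_peel, Peel.unpeel_peel]
  rw [sfToPod_recon hm₁
      (show mToF (evenHalves m₁) (bnd (mToF (evenHalves m₁))) = 0 from bnd_spec (podF_bound m₁)),
    sfToPod_recon hm₂
      (show mToF (evenHalves m₂) (bnd (mToF (evenHalves m₂))) = 0 from bnd_spec (podF_bound m₂))]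

lemma fwd_bwd {N : ℕ} {y : ℤ × ((ℕ → ℕ) × (ℕ → ℕ) × (ℕ → ℕ))} (hy : YP N y) :
    fwdRaw (bwdRaw y) = y := by
  obtain ⟨k, μ, f₁, f₂⟩ := y
  obtain ⟨hμ, hf₁, hf₂, _⟩ := hy
  simp only at hμ hf₁ hf₂
  have hB : μ (bnd μ) = 0 := bnd_spec hμ.2
  have hμa := hμ.1
  have hda := Durfee.dOf_antitone (k := k) hμa hB
  have hds := Durfee.dOf_supp (k := k) hμa hB
  have hea := Durfee.eOf_antitone (k := k) hμa hB
  have hes := Durfee.eOf_supp (k := k) hμa hB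
  simp only [bwdRaw, fwdRaw, podK, podMu, podF]
  rw [oddHalves_sfToPod, oddHalves_sfToPod]
  rw [Peel.unpeel_card hda, Peel.unpeel_card hea]
  rw [Peel.peel_unpeel hda hds, Peel.peel_unpeel hea hes]
  rw [mToF_sfToPod hf₁.1 (bnd_spec hf₁.2), mToF_sfToPod hf₂.1 (bnd_spec hf₂.2)]
  rw [Durfee.mu_recon (k := k) hμa hB]
  have hka := Durfee.cast_aOf (k := k) hμa hB
  have hk : ((Durfee.aOf k μ : ℤ)) - (Durfee.cOf k μ : ℤ) = k := by omega
  rw [hk]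

noncomputable def bigEquiv (N : ℕ) : {x : Multiset ℕ × Multiset ℕ // XP N x} ≃
    {y : ℤ × ((ℕ → ℕ) × (ℕ → ℕ) × (ℕ → ℕ)) // YP N y} where
  toFun x := ⟨fwdRaw x.1, fwd_prop x.2⟩
  invFun y := ⟨bwdRaw y.1, bwd_prop y.2⟩
  left_inv x := Subtype.ext (bwd_fwd x.2)
  right_inv y := Subtype.ext (fwd_bwd y.2)

end Assembly


section Final

noncomputable def rotY (N : ℕ) : Equiv.Perm {y : ℤ × ((ℕ → ℕ) × (ℕ → ℕ) × (ℕ → ℕ)) // YP N y} where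
  toFun y := ⟨(y.1.1, (y.1.2.2.1, y.1.2.2.2, y.1.2.1)),
    ⟨y.2.2.1, y.2.2.2.1, y.2.1, by
      have hw := y.2.2.2.2
      linear_combination hw⟩⟩
  invFun y := ⟨(y.1.1, (y.1.2.2.2, y.1.2.1, y.1.2.2.1)),
    ⟨y.2.2.2.1, y.2.1, y.2.2.1, by
      have hw := y.2.2.2.2
      linear_combination hw⟩⟩
  left_inv y := Subtype.ext rfl
  right_inv y := Subtype.ext rfl

lemma rotY_cube (N : ℕ) (y : {y : ℤ × ((ℕ → ℕ) × (ℕ → ℕ) × (ℕ → ℕ)) // YP N y}) :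
    rotY N (rotY N (rotY N y)) = y := Subtype.ext rfl

lemma rotY_no_fix (n : ℕ) (y : {y : ℤ × ((ℕ → ℕ) × (ℕ → ℕ) × (ℕ → ℕ)) // YP (3 * n + 2) y}) :
    rotY (3 * n + 2) y ≠ y := by
  intro hEq
  have h1 : y.1.2.2.1 = y.1.2.1 := congrArg (fun z => z.1.2.1) hEq
  have h2 : y.1.2.2.2 = y.1.2.2.1 := congrArg (fun z => z.1.2.2.1) hEq
  have hw := y.2.2.2.2
  rw [h2, h1] at hw
  set k := y.1.1 with hk
  set W := (wF y.1.2.1 : ℤ) with hW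
  have hw' : k ^ 2 + 6 * W = 3 * (n : ℤ) + 2 := by push_cast at hw ⊢; linear_combination hw
  have hmod : k % 3 = 0 ∨ k % 3 = 1 ∨ k % 3 = 2 := by omega
  obtain ⟨t, ht⟩ : ∃ t, k = 3 * t + k % 3 := ⟨k / 3, by omega⟩
  have hexp : ∀ r : ℤ, (3 * t + r) ^ 2 = 3 * (3 * (t * t) + 2 * (t * r)) + r * r := by
    intro r; ring
  rcases hmod with h | h | h <;>
  · rw [h] at ht
    rw [ht, hexp] at hw'
    generalize 3 * (t * t) + 2 * (t * (0:ℤ)) = M at hw'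
    generalize 3 * (t * t) + 2 * (t * (1:ℤ)) = M at hw'
    generalize 3 * (t * t) + 2 * (t * (2:ℤ)) = M at hw'
    omega

end Final

theorem pod2_congruence (n : ℕ) :
    3 ∣ Nat.card {x : Multiset ℕ × Multiset ℕ //
      IsPOD x.1 ∧ IsPOD x.2 ∧ x.1.sum + x.2.sum = 3 * n + 2} := by
  have e1 : {x : Multiset ℕ × Multiset ℕ //
      IsPOD x.1 ∧ IsPOD x.2 ∧ x.1.sum + x.2.sum = 3 * n + 2}
      ≃ {x : Multiset ℕ × Multiset ℕ // XP (3 * n + 2) x} :=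
    Equiv.subtypeEquivRight (fun x => Iff.rfl)
  rw [Nat.card_congr (e1.trans (bigEquiv (3 * n + 2)))]
  exact three_dvd_card_of_rot (rotY (3 * n + 2)) (rotY_cube (3 * n + 2)) (rotY_no_fix n)
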